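/- For a = m/√|β| > 0 and the map T defined by (Tψ)(p) = iħ[(1 − (|β|/m²)p²)ψ'(p) − (|β|/m²)p ψ(p)] on absolutely continuous ψ on I = (−a, a), the ODE Tφ = ∓iφ has general solution φ_±(p) = B_± exp(∓ m artanh(p√|β|/m)/(ħ√|β|)) / √(m² − |β|p²), and no nonzero such solution is square-integrable on I. -/

import Mathlib

open Real Complex MeasureTheory

noncomputable def _root_.artanh (x : ℝ) : ℝ := (1 / 2) * Real.log ((1 + x) / (1 - x))

/- ### Auxiliary lemmas -/

lemma aux_base_not_int {a : ℝ} (ha : 0 < a) :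
    ¬ IntegrableOn (fun x : ℝ => x⁻¹) (Set.Ioo 0 a) := by
  intro h
  have h2 : IntegrableOn (fun x : ℝ => x ^ (-1 : ℝ)) (Set.Ioo 0 a) := by
    apply h.congr_fun ?_ measurableSet_Ioo
    intro x hx
    simp [Real.rpow_neg_one]
  rw [intervalIntegral.integrableOn_Ioo_rpow_iff ha] at h2
  linarith

lemma aux_left_not_int {a : ℝ} (ha : 0 < a) :
    ¬ IntegrableOn (fun p : ℝ => (p + a)⁻¹) (Set.Ioo (-a) 0) := by
  intro h
  apply aux_base_not_int ha
  have key := (measurePreserving_add_right (volume : Measure ℝ) (-a)).integrableOn_comp_preimage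
      (Homeomorph.addRight (-a)).measurableEmbedding (f := fun p : ℝ => (p + a)⁻¹)
      (s := Set.Ioo (-a) 0)
  rw [← key] at h
  have hset : (fun x : ℝ => x + (-a)) ⁻¹' Set.Ioo (-a) 0 = Set.Ioo 0 a := by
    ext x
    simp only [Set.mem_preimage, Set.mem_Ioo]
    constructor <;> intro hx <;> exact ⟨by linarith [hx.1, hx.2], by linarith [hx.1, hx.2]⟩
  rw [hset] at h
  apply h.congr_fun ?_ measurableSet_Ioo
  intro x hx
  simp

lemma aux_right_not_int {a : ℝ} (ha : 0 < a) :
    ¬ IntegrableOn (fun p : ℝ => (a - p)⁻¹) (Set.Ioo 0 a) := by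
  intro h
  apply aux_base_not_int ha
  have hmp : MeasurePreserving (fun t : ℝ => a - t) volume volume := by
    have := (measurePreserving_add_left (volume : Measure ℝ) a).comp
      (Measure.measurePreserving_neg (volume : Measure ℝ))
    simpa [Function.comp_def, sub_eq_add_neg] using this
  have hemb : MeasurableEmbedding (fun t : ℝ => a - t) := by
    have := (Homeomorph.subLeft (a : ℝ)).measurableEmbedding
    simpa using this
  have key := hmp.integrableOn_comp_preimage hemb (f := fun p : ℝ => (a - p)⁻¹)
      (s := Set.Ioo 0 a)
  rw [← key] at h
  have hset : (fun x : ℝ => a - x) ⁻¹' Set.Ioo 0 a = Set.Ioo 0 a := by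
    ext x
    simp only [Set.mem_preimage, Set.mem_Ioo]
    constructor <;> intro hx <;> exact ⟨by linarith [hx.1, hx.2], by linarith [hx.1, hx.2]⟩
  rw [hset] at h
  apply h.congr_fun ?_ measurableSet_Ioo
  intro x hx
  simp

lemma aux_compare_not_int {S : Set ℝ} (hS : MeasurableSet S) {w : ℝ → ℝ} (hw : Measurable w)
    (K : ℝ) (hK : 0 < K) {f : ℝ → ℝ} (hle : ∀ p ∈ S, K * w p ≤ f p)
    (hwn : ∀ p ∈ S, 0 ≤ w p) (hni : ¬ IntegrableOn w S) : ¬ IntegrableOn f S := by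
  intro hint
  apply hni
  have h1 : IntegrableOn (fun p => K * w p) S := by
    apply Integrable.mono' hint ((hw.const_mul K).aestronglyMeasurable)
    rw [ae_restrict_iff' hS]
    filter_upwards with p hp
    rw [Real.norm_eq_abs, _root_.abs_of_nonneg (mul_nonneg hK.le (hwn p hp))]
    exact hle p hp
  have h2 : IntegrableOn (fun x => K⁻¹ * (K * w x)) S := h1.const_mul K⁻¹
  have h3 : IntegrableOn w S := by
    apply h2.congr_fun ?_ hS
    intro x hx
    simp only
    rw [← mul_assoc, inv_mul_cancel₀ hK.ne', one_mul]
  exact h3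

lemma aux_sqb_bounds (m b p : ℝ) (hb : 0 < b)
    (hp : p ∈ Set.Ioo (-(m / Real.sqrt b)) (m / Real.sqrt b)) :
    -m < p * Real.sqrt b ∧ p * Real.sqrt b < m := by
  have hs : 0 < Real.sqrt b := Real.sqrt_pos.mpr hb
  have hsne : Real.sqrt b ≠ 0 := hs.ne'
  constructor
  · have h1 := mul_lt_mul_of_pos_right hp.1 hs
    rwa [neg_mul, div_mul_cancel₀ _ hsne] at h1
  · have h2 := mul_lt_mul_of_pos_right hp.2 hs
    rwa [div_mul_cancel₀ _ hsne] at h2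

lemma aux_pos_fact (m b p : ℝ) (hb : 0 < b)
    (hp : p ∈ Set.Ioo (-(m / Real.sqrt b)) (m / Real.sqrt b)) :
    0 < m ^ 2 - b * p ^ 2 := by
  obtain ⟨h1, h2⟩ := aux_sqb_bounds m b p hb hp
  have hsb : Real.sqrt b ^ 2 = b := Real.sq_sqrt hb.le
  nlinarith [h1, h2]

lemma aux_hasDerivAt_artanh (m b p : ℝ) (hm : 0 < m) (hb : 0 < b)
    (hp : p ∈ Set.Ioo (-(m / Real.sqrt b)) (m / Real.sqrt b)) :
    HasDerivAt (fun q => _root_.artanh (q * Real.sqrt b / m))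
      (Real.sqrt b * m / (m ^ 2 - b * p ^ 2)) p := by
  have hs : 0 < Real.sqrt b := Real.sqrt_pos.mpr hb
  have hsb : Real.sqrt b ^ 2 = b := Real.sq_sqrt hb.le
  obtain ⟨h1, h2⟩ := aux_sqb_bounds m b p hb hp
  have hx1 : -1 < p * Real.sqrt b / m := by rw [lt_div_iff₀ hm]; linarith
  have hx2 : p * Real.sqrt b / m < 1 := by rw [div_lt_one hm]; linarith
  have hpos := aux_pos_fact m b p hb hp
  have hu : HasDerivAt (fun q : ℝ => 1 + q * Real.sqrt b / m) (Real.sqrt b / m) p := by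
    simpa using (((hasDerivAt_id p).mul_const (Real.sqrt b)).div_const m).const_add 1
  have hv : HasDerivAt (fun q : ℝ => 1 - q * Real.sqrt b / m) (-(Real.sqrt b / m)) p := by
    simpa using (((hasDerivAt_id p).mul_const (Real.sqrt b)).div_const m).const_sub 1
  have hupos : 0 < 1 + p * Real.sqrt b / m := by linarith
  have hvpos : 0 < 1 - p * Real.sqrt b / m := by linarith
  have hg : HasDerivAt
      (fun q : ℝ => (1 / 2) * (Real.log (1 + q * Real.sqrt b / m)
        - Real.log (1 - q * Real.sqrt b / m)))
      (Real.sqrt b * m / (m ^ 2 - b * p ^ 2)) p := by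
    have hl1 := hu.log hupos.ne'
    have hl2 := hv.log hvpos.ne'
    have hcomb := ((hl1.sub hl2).const_mul (1 / 2 : ℝ))
    convert hcomb using 1
    · rfl
    · rfl
    · rfl
    rw [div_sub_div _ _ hupos.ne' hvpos.ne']
    have key : (1 + p * Real.sqrt b / m) * (1 - p * Real.sqrt b / m)
        = (m ^ 2 - b * p ^ 2) / m ^ 2 := by
      field_simp
      linear_combination (-(p ^ 2)) * hsb
    rw [key]
    field_simp
    ring
  apply hg.congr_of_eventuallyEq
  have hopen : Set.Ioo (-(m / Real.sqrt b)) (m / Real.sqrt b) ∈ nhds p :=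
    isOpen_Ioo.mem_nhds hp
  filter_upwards [hopen] with q hq
  obtain ⟨hq1, hq2⟩ := aux_sqb_bounds m b q hb hq
  have hq1' : 0 < 1 + q * Real.sqrt b / m := by
    have : -1 < q * Real.sqrt b / m := by rw [lt_div_iff₀ hm]; linarith
    linarith
  have hq2' : 0 < 1 - q * Real.sqrt b / m := by
    have : q * Real.sqrt b / m < 1 := by rw [div_lt_one hm]; linarith
    linarith
  unfold _root_.artanh
  rw [Real.log_div hq1'.ne' hq2'.ne']

lemma aux_artanh_nonpos {x : ℝ} (hx1 : -1 < x) (hx : x ≤ 0) : _root_.artanh x ≤ 0 := by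
  unfold _root_.artanh
  apply mul_nonpos_of_nonneg_of_nonpos (by norm_num)
  apply Real.log_nonpos
  · apply div_nonneg (by linarith) (by linarith)
  · rw [div_le_one (by linarith)]
    linarith

lemma aux_artanh_nonneg {x : ℝ} (hx : 0 ≤ x) (hx2 : x < 1) : 0 ≤ _root_.artanh x := by
  unfold _root_.artanh
  apply mul_nonneg (by norm_num)
  apply Real.log_nonneg
  rw [le_div_iff₀ (by linarith)]
  linarith

lemma aux_exp_eq (ε m hbar sb t : ℝ) :
    Complex.exp (-(ε : ℂ) * m * (t : ℂ) / ((hbar : ℂ) * (sb : ℂ)))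
      = ((Real.exp (-(ε * m * t / (hbar * sb))) : ℝ) : ℂ) := by
  rw [Complex.ofReal_exp]
  congr 1
  push_cast
  ring

/-- The representation part: every solution has the stated form. -/
lemma aux_rep (hbar m b : ℝ) (hhbar : 0 < hbar) (hm : 0 < m) (hb : 0 < b)
    (ε : ℝ)
    (φ φ' : ℝ → ℂ)
    (hderiv : ∀ p ∈ Set.Ioo (-(m / Real.sqrt b)) (m / Real.sqrt b),
      HasDerivAt φ (φ' p) p)
    (hODE : ∀ p ∈ Set.Ioo (-(m / Real.sqrt b)) (m / Real.sqrt b),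
      Complex.I * hbar * ((1 - (b / m ^ 2) * p ^ 2) * φ' p
          - (b / m ^ 2) * p * φ p)
        = -(ε : ℂ) * Complex.I * φ p) :
    ∃ B : ℂ, ∀ p ∈ Set.Ioo (-(m / Real.sqrt b)) (m / Real.sqrt b),
      φ p = B * Complex.exp
          (-(ε : ℂ) * m * (_root_.artanh (p * Real.sqrt b / m)) / (hbar * Real.sqrt b)) /
        (Real.sqrt (m ^ 2 - b * p ^ 2) : ℂ) := by
  have hs : 0 < Real.sqrt b := Real.sqrt_pos.mpr hb
  have hsb : Real.sqrt b ^ 2 = b := Real.sq_sqrt hb.le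
  obtain ⟨c, hc_def⟩ : ∃ c : ℝ, c = ε * m / (hbar * Real.sqrt b) := ⟨_, rfl⟩
  set A : ℝ → ℝ := fun p => _root_.artanh (p * Real.sqrt b / m) with hA_def
  set R : ℝ → ℝ := fun p => Real.sqrt (m ^ 2 - b * p ^ 2) with hR_def
  set E : ℝ → ℝ := fun p => Real.exp (c * A p) with hE_def
  set h : ℝ → ℂ := fun p => φ p * ((E p * R p : ℝ) : ℂ) with hh_def
  have hRpos : ∀ p ∈ Set.Ioo (-(m / Real.sqrt b)) (m / Real.sqrt b), 0 < R p := by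
    intro p hp; exact Real.sqrt_pos.mpr (aux_pos_fact m b p hb hp)
  have hR2 : ∀ p ∈ Set.Ioo (-(m / Real.sqrt b)) (m / Real.sqrt b),
      R p ^ 2 = m ^ 2 - b * p ^ 2 := by
    intro p hp; exact Real.sq_sqrt (aux_pos_fact m b p hb hp).le
  have hRder : ∀ p ∈ Set.Ioo (-(m / Real.sqrt b)) (m / Real.sqrt b),
      HasDerivAt R (-(b * p) / R p) p := by
    intro p hp
    have hinner : HasDerivAt (fun q : ℝ => m ^ 2 - b * q ^ 2) (-(b * (2 * p))) p := by
      simpa using ((hasDerivAt_pow 2 p).const_mul b).const_sub (m ^ 2)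
    have hder := hinner.sqrt (aux_pos_fact m b p hb hp).ne'
    convert hder using 1
    rw [hR_def]
    field_simp
  have hEder : ∀ p ∈ Set.Ioo (-(m / Real.sqrt b)) (m / Real.sqrt b),
      HasDerivAt E (E p * (c * (Real.sqrt b * m / (m ^ 2 - b * p ^ 2)))) p := by
    intro p hp
    exact ((aux_hasDerivAt_artanh m b p hm hb hp).const_mul c).exp
  have hhder : ∀ p ∈ Set.Ioo (-(m / Real.sqrt b)) (m / Real.sqrt b),
      HasDerivAt h 0 p := by
    intro p hp
    have hpos := aux_pos_fact m b p hb hp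
    have hRne : R p ≠ 0 := (hRpos p hp).ne'
    have hMne : (m ^ 2 - b * p ^ 2 : ℝ) ≠ 0 := hpos.ne'
    have hcc : c * Real.sqrt b * m = ε * m ^ 2 / hbar := by
      rw [hc_def]; field_simp
    have hFder : HasDerivAt (fun q => E q * R q)
        (E p * (c * (Real.sqrt b * m / (m ^ 2 - b * p ^ 2))) * R p
          + E p * (-(b * p) / R p)) p := (hEder p hp).mul (hRder p hp)
    have hrr : E p * (c * (Real.sqrt b * m / (m ^ 2 - b * p ^ 2))) * R p
        + E p * (-(b * p) / R p)
        = E p * R p * ((c * Real.sqrt b * m - b * p) / (m ^ 2 - b * p ^ 2)) := by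
      have h2 := hR2 p hp
      field_simp
      linear_combination (E p * b * p) * h2
    rw [hrr] at hFder
    have hmul := (hderiv p hp).mul hFder.ofReal_comp
    have e1 : ((m : ℂ) ^ 2 - (b : ℂ) * (p : ℂ) ^ 2) * φ' p
        = ((b : ℂ) * p - (ε : ℂ) * m ^ 2 / hbar) * φ p := by
      have h0 := hODE p hp
      have hI := Complex.I_ne_zero
      have hh0 : (hbar : ℂ) ≠ 0 := by exact_mod_cast hhbar.ne'
      have hm0 : (m : ℂ) ≠ 0 := by exact_mod_cast hm.ne'
      have h0' : (hbar : ℂ) * ((1 - (b : ℂ) / (m : ℂ) ^ 2 * (p : ℂ) ^ 2) * φ' p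
          - (b : ℂ) / (m : ℂ) ^ 2 * (p : ℂ) * φ p) = -(ε : ℂ) * φ p := by
        apply mul_left_cancel₀ hI
        linear_combination h0
      field_simp at h0' ⊢
      linear_combination h0'
    have hMneC : ((m : ℂ) ^ 2 - (b : ℂ) * (p : ℂ) ^ 2) ≠ 0 := by
      have hcast : ((m ^ 2 - b * p ^ 2 : ℝ) : ℂ) ≠ 0 := Complex.ofReal_ne_zero.mpr hMne
      push_cast at hcast; exact hcast
    have e1' : φ' p
        = ((((b * p - ε * m ^ 2 / hbar) / (m ^ 2 - b * p ^ 2)) : ℝ) : ℂ) * φ p := by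
      push_cast
      rw [div_mul_eq_mul_div, eq_div_iff hMneC]
      linear_combination e1
    have hw : ((b * p - ε * m ^ 2 / hbar) / (m ^ 2 - b * p ^ 2))
        + ((c * Real.sqrt b * m - b * p) / (m ^ 2 - b * p ^ 2)) = 0 := by
      rw [← add_div]
      have hnum : b * p - ε * m ^ 2 / hbar + (c * Real.sqrt b * m - b * p) = 0 := by
        rw [hcc]; ring
      rw [hnum, zero_div]
    have hwC := congrArg (Complex.ofReal) hw
    have hD : φ' p * ((E p * R p : ℝ) : ℂ)
        + φ p * ((E p * R p * ((c * Real.sqrt b * m - b * p) / (m ^ 2 - b * p ^ 2)) : ℝ) : ℂ)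
        = 0 := by
      rw [e1']
      push_cast at hwC ⊢
      linear_combination (φ p * (E p : ℂ) * (R p : ℂ)) * hwC
    rw [hh_def]
    rwa [hD] at hmul
  -- h is constant on the interval
  have h0mem : (0 : ℝ) ∈ Set.Ioo (-(m / Real.sqrt b)) (m / Real.sqrt b) :=
    ⟨neg_lt_zero.mpr (div_pos hm hs), div_pos hm hs⟩
  have hconst : ∀ p ∈ Set.Ioo (-(m / Real.sqrt b)) (m / Real.sqrt b), h p = h 0 := by
    intro p hp
    apply (convex_Ioo _ _).is_const_of_fderivWithin_eq_zero
      (fun x hx => ((hhder x hx).differentiableAt).differentiableWithinAt)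
      ?_ hp h0mem
    intro x hx
    rw [fderivWithin_of_isOpen isOpen_Ioo hx, ((hhder x hx).hasFDerivAt).fderiv]
    ext y
    simp
  refine ⟨h 0, fun p hp => ?_⟩
  have hRneC : ((R p : ℝ) : ℂ) ≠ 0 := Complex.ofReal_ne_zero.mpr (hRpos p hp).ne'
  have hexp : Complex.exp
      (-(ε : ℂ) * m * (_root_.artanh (p * Real.sqrt b / m)) / (hbar * Real.sqrt b))
      = ((Real.exp (-(c * A p)) : ℝ) : ℂ) := by
    rw [aux_exp_eq]
    congr 2
    rw [hc_def, hA_def]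
    ring
  show φ p = h 0 * Complex.exp _ / ((R p : ℝ) : ℂ)
  rw [hexp, eq_div_iff hRneC]
  have hc0 : φ p * ((E p * R p : ℝ) : ℂ) = h 0 := hconst p hp
  rw [Complex.ofReal_mul] at hc0
  have hEinv : E p * Real.exp (-(c * A p)) = 1 := by
    rw [hE_def]
    simp only
    rw [← Real.exp_add]
    simp
  have hEinvC : ((E p : ℝ) : ℂ) * ((Real.exp (-(c * A p)) : ℝ) : ℂ) = 1 := by
    rw [← Complex.ofReal_mul, hEinv, Complex.ofReal_one]
  linear_combination ((Real.exp (-(c * A p)) : ℝ) : ℂ) * hc0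
    - (φ p * ((R p : ℝ) : ℂ)) * hEinvC

/-- for the formal position operator
`(Tψ)(p) = i·hbar[(1 − (b/m²)p²)ψ'(p) − (b/m²)p ψ(p)]` (with `b = |β| > 0`) on
`I = (−a, a)`, `a = m/√b`, the ODE `Tφ = ∓iφ` has general solution
`φ_±(p) = B_± exp(∓ m artanh(p√b/m)/(hbar√b)) / √(m² − b p²)`, and no nonzero
such solution is square integrable on `I`. -/
theorem deficiency_solutions_not_square_integrable
    (hbar m b : ℝ) (hhbar : 0 < hbar) (hm : 0 < m) (hb : 0 < b)
    (ε : ℝ) (hε : ε = 1 ∨ ε = -1)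
    (φ φ' : ℝ → ℂ)
    (hderiv : ∀ p ∈ Set.Ioo (-(m / Real.sqrt b)) (m / Real.sqrt b),
      HasDerivAt φ (φ' p) p)
    (hODE : ∀ p ∈ Set.Ioo (-(m / Real.sqrt b)) (m / Real.sqrt b),
      Complex.I * hbar * ((1 - (b / m ^ 2) * p ^ 2) * φ' p
          - (b / m ^ 2) * p * φ p)
        = -(ε : ℂ) * Complex.I * φ p) :
    (∃ B : ℂ, ∀ p ∈ Set.Ioo (-(m / Real.sqrt b)) (m / Real.sqrt b),
      φ p = B * Complex.exp
          (-(ε : ℂ) * m * (_root_.artanh (p * Real.sqrt b / m)) / (hbar * Real.sqrt b)) /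
        (Real.sqrt (m ^ 2 - b * p ^ 2) : ℂ)) ∧
    ((∃ p ∈ Set.Ioo (-(m / Real.sqrt b)) (m / Real.sqrt b), φ p ≠ 0) →
      ¬ IntegrableOn (fun p => ‖φ p‖ ^ 2)
        (Set.Ioo (-(m / Real.sqrt b)) (m / Real.sqrt b))) := by
  obtain ⟨B, hrep⟩ := aux_rep hbar m b hhbar hm hb ε φ φ' hderiv hODE
  have hs : 0 < Real.sqrt b := Real.sqrt_pos.mpr hb
  have hsb : Real.sqrt b ^ 2 = b := Real.sq_sqrt hb.le
  have ha : 0 < m / Real.sqrt b := div_pos hm hs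
  refine ⟨⟨B, hrep⟩, ?_⟩
  rintro ⟨p₀, hp₀, hφ₀⟩ hint
  have hB : B ≠ 0 := by
    intro h0
    apply hφ₀
    rw [hrep p₀ hp₀, h0, zero_mul, zero_div]
  have hBn : 0 < ‖B‖ := norm_pos_iff.mpr hB
  -- norm formula
  have hnorm : ∀ p ∈ Set.Ioo (-(m / Real.sqrt b)) (m / Real.sqrt b),
      ‖φ p‖ ^ 2 = ‖B‖ ^ 2 * (Real.exp (-(ε * m * _root_.artanh (p * Real.sqrt b / m)
        / (hbar * Real.sqrt b)))) ^ 2 / (m ^ 2 - b * p ^ 2) := by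
    intro p hp
    have hpos := aux_pos_fact m b p hb hp
    have hRpos : 0 < Real.sqrt (m ^ 2 - b * p ^ 2) := Real.sqrt_pos.mpr hpos
    rw [hrep p hp, aux_exp_eq]
    rw [norm_div, norm_mul, Complex.norm_real, Complex.norm_real, Real.norm_eq_abs,
      Real.norm_eq_abs, Real.abs_exp, _root_.abs_of_pos hRpos, div_pow, mul_pow,
      Real.sq_sqrt hpos.le]
  rcases hε with hε | hε
  · -- ε = 1 : blow-up at the left endpoint
    subst hε
    have hsub : Set.Ioo (-(m / Real.sqrt b)) (0 : ℝ)
        ⊆ Set.Ioo (-(m / Real.sqrt b)) (m / Real.sqrt b) := Set.Ioo_subset_Ioo le_rfl ha.le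
    refine aux_compare_not_int measurableSet_Ioo
      ((measurable_id.add_const (m / Real.sqrt b)).inv)
      (‖B‖ ^ 2 / (2 * m * Real.sqrt b)) (by positivity) ?_ ?_
      (aux_left_not_int ha) (hint.mono_set hsub)
    · intro p hp
      have hp' : p ∈ Set.Ioo (-(m / Real.sqrt b)) (m / Real.sqrt b) :=
        ⟨hp.1, lt_trans hp.2 ha⟩
      obtain ⟨h1, h2⟩ := aux_sqb_bounds m b p hb hp'
      have hpos := aux_pos_fact m b p hb hp'
      have hpa : 0 < p + m / Real.sqrt b := by linarith [hp.1, neg_lt_iff_pos_add.mp hp.1]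
      rw [hnorm p hp']
      have hx1 : -1 < p * Real.sqrt b / m := by rw [lt_div_iff₀ hm]; linarith
      have hx0 : p * Real.sqrt b / m ≤ 0 :=
        div_nonpos_of_nonpos_of_nonneg
          (mul_nonpos_of_nonpos_of_nonneg (le_of_lt hp.2) hs.le) hm.le
      have hAle := aux_artanh_nonpos hx1 hx0
      have hexp1 : 1 ≤ Real.exp (-((1:ℝ) * m * _root_.artanh (p * Real.sqrt b / m)
          / (hbar * Real.sqrt b))) := by
        apply Real.one_le_exp
        have harg : (1:ℝ) * m * _root_.artanh (p * Real.sqrt b / m) / (hbar * Real.sqrt b) ≤ 0 :=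
          div_nonpos_of_nonpos_of_nonneg (by nlinarith [hAle, hm.le]) (by positivity)
        linarith
      have key1 : Real.sqrt b * (p + m / Real.sqrt b) = p * Real.sqrt b + m := by
        field_simp
      rw [Pi.inv_apply, ← div_eq_mul_inv, div_div]
      have he2 : 1 ≤ Real.exp (-((1:ℝ) * m * _root_.artanh (p * Real.sqrt b / m)
          / (hbar * Real.sqrt b))) ^ 2 := by nlinarith [hexp1]
      apply div_le_div₀ (by positivity)
        (by nlinarith [he2, sq_nonneg ‖B‖]) hpos
      simp only [id_eq]
      rw [mul_assoc, key1]
      nlinarith [sq_nonneg (m + p * Real.sqrt b), hsb]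
    · intro p hp
      have hpa : 0 < p + m / Real.sqrt b := by linarith [neg_lt_iff_pos_add.mp hp.1]
      exact (inv_pos.mpr hpa).le
  · -- ε = -1 : blow-up at the right endpoint
    subst hε
    have hsub : Set.Ioo (0 : ℝ) (m / Real.sqrt b)
        ⊆ Set.Ioo (-(m / Real.sqrt b)) (m / Real.sqrt b) :=
      Set.Ioo_subset_Ioo (by linarith) le_rfl
    refine aux_compare_not_int measurableSet_Ioo
      ((measurable_const.sub measurable_id).inv)
      (‖B‖ ^ 2 / (2 * m * Real.sqrt b)) (by positivity) ?_ ?_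
      (aux_right_not_int ha) (hint.mono_set hsub)
    · intro p hp
      have hp' : p ∈ Set.Ioo (-(m / Real.sqrt b)) (m / Real.sqrt b) :=
        ⟨by linarith [hp.1], hp.2⟩
      obtain ⟨h1, h2⟩ := aux_sqb_bounds m b p hb hp'
      have hpos := aux_pos_fact m b p hb hp'
      have hpa : 0 < m / Real.sqrt b - p := by linarith [hp.2]
      rw [hnorm p hp']
      have hx2 : p * Real.sqrt b / m < 1 := by rw [div_lt_one hm]; linarith
      have hx0 : 0 ≤ p * Real.sqrt b / m :=
        div_nonneg (mul_nonneg (le_of_lt hp.1) hs.le) hm.le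
      have hAge := aux_artanh_nonneg hx0 hx2
      have hexp1 : 1 ≤ Real.exp (-((-1:ℝ) * m * _root_.artanh (p * Real.sqrt b / m)
          / (hbar * Real.sqrt b))) := by
        apply Real.one_le_exp
        have harg : 0 ≤ m * _root_.artanh (p * Real.sqrt b / m) / (hbar * Real.sqrt b) :=
          div_nonneg (by nlinarith [hAge, hm.le]) (by positivity)
        have hrw : -((-1:ℝ) * m * _root_.artanh (p * Real.sqrt b / m) / (hbar * Real.sqrt b))
            = m * _root_.artanh (p * Real.sqrt b / m) / (hbar * Real.sqrt b) := by ring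
        linarith [hrw ▸ harg]
      have key1 : Real.sqrt b * (m / Real.sqrt b - p) = m - p * Real.sqrt b := by
        field_simp
      rw [Pi.inv_apply, Pi.sub_apply, ← div_eq_mul_inv, div_div]
      have he2 : 1 ≤ Real.exp (-((-1:ℝ) * m * _root_.artanh (p * Real.sqrt b / m)
          / (hbar * Real.sqrt b))) ^ 2 := by nlinarith [hexp1]
      apply div_le_div₀ (by positivity)
        (by nlinarith [he2, sq_nonneg ‖B‖]) hpos
      simp only [id_eq]
      rw [mul_assoc, key1]
      nlinarith [sq_nonneg (m - p * Real.sqrt b), hsb]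
    · intro p hp
      have hpa : 0 < m / Real.sqrt b - p := by linarith [hp.2]
      exact (inv_pos.mpr hpa).le
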